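/- Let X₀, X₁ be random vectors in ℝ^d with joint distribution Q, let π₀, π₁ ≥ 0 with π₀+π₁=1, and let μ₁,…,μ_K ∈ ℝ^d. Then E_Q[π₀ min_k ‖X₀-μ_k‖² + π₁ min_k ‖X₁-μ_k‖²] ≤ E_Q[π₀π₁‖X₀-X₁‖² + min_k ‖π₀X₀+π₁X₁-μ_k‖²]. -/

import Mathlib

lemma key_identity {E : Type*} [NormedAddCommGroup E] [InnerProductSpace ℝ E]
    (π₀ π₁ : ℝ) (hsum : π₀ + π₁ = 1) (a b m : E) :
    π₀ * ‖a - m‖ ^ 2 + π₁ * ‖b - m‖ ^ 2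
      = π₀ * π₁ * ‖a - b‖ ^ 2 + ‖π₀ • a + π₁ • b - m‖ ^ 2 := by
  set u := a - m
  set v := b - m
  have hab : a - b = u - v := by simp [u, v]
  have hm : π₀ • a + π₁ • b - m = π₀ • u + π₁ • v := by
    have h : π₀ • u + π₁ • v = π₀ • a + π₁ • b - (π₀ + π₁) • m := by
      simp only [u, v, smul_sub, add_smul]; abel
    rw [h, hsum, one_smul]
  rw [hab, hm]
  have h1 : ‖u - v‖ ^ 2 = ‖u‖ ^ 2 - 2 * inner ℝ u v + ‖v‖ ^ 2 :=
    norm_sub_sq_real u v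
  have h2 : ‖π₀ • u + π₁ • v‖ ^ 2
      = ‖π₀ • u‖ ^ 2 + 2 * inner ℝ (π₀ • u) (π₁ • v) + ‖π₁ • v‖ ^ 2 :=
    norm_add_sq_real _ _
  have h3 : (inner ℝ (π₀ • u) (π₁ • v) : ℝ) = π₀ * π₁ * inner ℝ u v := by
    rw [real_inner_smul_left, real_inner_smul_right]; ring
  have h4 : ‖π₀ • u‖ ^ 2 = π₀ ^ 2 * ‖u‖ ^ 2 := by
    rw [norm_smul]; simp [mul_pow, sq_abs]
  have h5 : ‖π₁ • v‖ ^ 2 = π₁ ^ 2 * ‖v‖ ^ 2 := by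
    rw [norm_smul]; simp [mul_pow, sq_abs]
  rw [h1, h2, h3, h4, h5]
  linear_combination (-(π₀ * ‖u‖ ^ 2 + π₁ * ‖v‖ ^ 2)) * hsum

theorem stmt_2 (d K : ℕ) [NeZero K] (Ω : Type) [Fintype Ω]
    (w : Ω → ℝ) (hw : ∀ ω, 0 ≤ w ω) (hw1 : ∑ ω, w ω = 1)
    (X₀ X₁ : Ω → EuclideanSpace ℝ (Fin d))
    (π₀ π₁ : ℝ) (h₀ : 0 ≤ π₀) (h₁ : 0 ≤ π₁) (hsum : π₀ + π₁ = 1)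
    (μ : Fin K → EuclideanSpace ℝ (Fin d)) :
    ∑ ω, w ω *
        (π₀ * (Finset.univ.inf' Finset.univ_nonempty fun k => ‖X₀ ω - μ k‖ ^ 2)
          + π₁ * (Finset.univ.inf' Finset.univ_nonempty fun k => ‖X₁ ω - μ k‖ ^ 2))
      ≤ ∑ ω, w ω *
        (π₀ * π₁ * ‖X₀ ω - X₁ ω‖ ^ 2
          + Finset.univ.inf' Finset.univ_nonempty fun k =>
              ‖π₀ • X₀ ω + π₁ • X₁ ω - μ k‖ ^ 2) := by
  apply Finset.sum_le_sum
  intro ω _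
  apply mul_le_mul_of_nonneg_left _ (hw ω)
  obtain ⟨k, -, hk⟩ := Finset.exists_mem_eq_inf' (Finset.univ_nonempty)
    (fun k => ‖π₀ • X₀ ω + π₁ • X₁ ω - μ k‖ ^ 2)
  rw [hk]
  have hL0 : (Finset.univ.inf' Finset.univ_nonempty fun k => ‖X₀ ω - μ k‖ ^ 2)
      ≤ ‖X₀ ω - μ k‖ ^ 2 := Finset.inf'_le _ (Finset.mem_univ k)
  have hL1 : (Finset.univ.inf' Finset.univ_nonempty fun k => ‖X₁ ω - μ k‖ ^ 2)
      ≤ ‖X₁ ω - μ k‖ ^ 2 := Finset.inf'_le _ (Finset.mem_univ k)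
  have := key_identity π₀ π₁ hsum (X₀ ω) (X₁ ω) (μ k)
  nlinarith [mul_le_mul_of_nonneg_left hL0 h₀, mul_le_mul_of_nonneg_left hL1 h₁]
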